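/- Let q be a fixed point of the replicator dynamics of a linear congestion game and let p(t) be a solution that remains in the interior of Δ for all t. Define the relative entropy I(p) = −Σ_i Σ_{γ: q_{iγ}>0} q_{iγ} ln(p_{iγ}/q_{iγ}), which satisfies I(p) ≥ 0 with equality iff p = q. Then dI(p(t))/dt = Ψ(q) − Ψ(p(t)) − Σ_{i,γ} p_{iγ}(t)(d̂_i − d_{iγ}), where d_{iγ} = c_{iγ}(q), d̂_i = ĉ_i(q), and Ψ(p) = Σ_i ĉ_i(p) + Σ_{i,γ∈S_i} Σ_{e∈γ}(a_e + b_e) p_{iγ}. -/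

import Mathlib

open Filter Topology Finset MeasureTheory

variable {N E : Type} [Fintype N] [DecidableEq N] [Fintype E] [DecidableEq E]
  {S : N → Type} [∀ i, Fintype (S i)] [∀ i, DecidableEq (S i)]

/-- The load of resource `e` under the pure strategy profile `s`:
the number of players whose chosen strategy uses `e`. -/
def resLoad (strat : ∀ i, S i → Finset E) (s : ∀ i, S i) (e : E) : ℕ :=
  (Finset.univ.filter fun j => e ∈ strat j (s j)).card

/-- The cost of player `i` at the pure profile `s`, with linear resource costs
`c_e(x) = a_e·x + b_e`. -/
def pureCost (strat : ∀ i, S i → Finset E) (a b : E → ℝ) (s : ∀ i, S i) (i : N) : ℝ :=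
  ∑ e ∈ strat i (s i), (a e * (resLoad strat s e : ℝ) + b e)

/-- Expected cost `c_{iγ}(p)` of player `i` playing strategy `γ` against the
mixed profile `p` (expectation over the other players' mixed strategies). -/
def expCost (strat : ∀ i, S i → Finset E) (a b : E → ℝ) (p : ∀ i, S i → ℝ)
    (i : N) (γ : S i) : ℝ :=
  ∑ s : ∀ j, S j,
    if s i = γ then (∏ j ∈ Finset.univ.erase i, p j (s j)) * pureCost strat a b s i
    else 0

/-- Expected cost `ĉ_i(p) = Σ_γ p_{iγ} c_{iγ}(p)` of player `i`. -/
def avgCost (strat : ∀ i, S i → Finset E) (a b : E → ℝ) (p : ∀ i, S i → ℝ)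
    (i : N) : ℝ :=
  ∑ γ, p i γ * expCost strat a b p i γ

/-- Membership in the product of simplices `Δ`. -/
def inSimplex (p : ∀ i, S i → ℝ) : Prop :=
  ∀ i, (∀ γ, 0 ≤ p i γ) ∧ ∑ γ, p i γ = 1

/-- `q` is a fixed point of the replicator dynamics: every strategy played with
positive probability has expected cost equal to the player's average cost. -/
def isFixedPt (strat : ∀ i, S i → Finset E) (a b : E → ℝ) (q : ∀ i, S i → ℝ) : Prop :=
  ∀ i (γ : S i), 0 < q i γ → expCost strat a b q i γ = avgCost strat a b q i

/-- `p : ℝ → Δ` is a solution of the replicator dynamics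
`dp_{iγ}/dt = p_{iγ}(ĉ_i(p) - c_{iγ}(p))` on `[0,∞)`, staying in `Δ`. -/
def isReplicatorSol (strat : ∀ i, S i → Finset E) (a b : E → ℝ)
    (p : ℝ → ∀ i, S i → ℝ) : Prop :=
  (∀ t, 0 ≤ t → inSimplex (p t)) ∧
  ∀ t, 0 ≤ t → ∀ i (γ : S i),
    HasDerivAt (fun τ => p τ i γ)
      (p t i γ * (avgCost strat a b (p t) i - expCost strat a b (p t) i γ)) t

/-- The potential function `Ψ(p) = Σ_i ĉ_i(p) + Σ_{i,γ} Σ_{e∈γ} (a_e + b_e) p_{iγ}`. -/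
def potFn (strat : ∀ i, S i → Finset E) (a b : E → ℝ) (p : ∀ i, S i → ℝ) : ℝ :=
  (∑ i, avgCost strat a b p i) +
    ∑ i, ∑ γ, (∑ e ∈ strat i γ, (a e + b e)) * p i γ

/-- The relative entropy `I(p) = -Σ_i Σ_{γ : q_{iγ} > 0} q_{iγ} ln(p_{iγ}/q_{iγ})`
with respect to a point `q`. -/
noncomputable def relEnt (q p : ∀ i, S i → ℝ) : ℝ :=
  -∑ i, ∑ γ, if 0 < q i γ then q i γ * Real.log (p i γ / q i γ) else 0

noncomputable def marg (strat : ∀ i, S i → Finset E) (p : ∀ i, S i → ℝ) (j : N) (e : E) : ℝ :=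
  ∑ δ, if e ∈ strat j δ then p j δ else 0

lemma sum_ite_pi (i : N) (γ : S i) (h : ∀ j, S j → ℝ) :
    (∑ s : ∀ j, S j, if s i = γ then ∏ j ∈ Finset.univ.erase i, h j (s j) else 0)
      = ∏ j ∈ Finset.univ.erase i, ∑ δ, h j δ := by
  classical
  set u : ∀ j, S j → ℝ := Function.update h i (fun δ => if δ = γ then (1:ℝ) else 0) with hu
  have hterm : ∀ s : ∀ j, S j,
      (if s i = γ then ∏ j ∈ Finset.univ.erase i, h j (s j) else 0) = ∏ j, u j (s j) := by
    intro s
    rw [← Finset.mul_prod_erase Finset.univ (fun j => u j (s j)) (Finset.mem_univ i)]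
    have h1 : u i (s i) = if s i = γ then (1:ℝ) else 0 := by simp [hu]
    have h2 : ∏ j ∈ Finset.univ.erase i, u j (s j) = ∏ j ∈ Finset.univ.erase i, h j (s j) :=
      Finset.prod_congr rfl fun j hj => by
        rw [hu, Function.update_of_ne (Finset.mem_erase.1 hj).1]
    rw [h1, h2, ite_mul, one_mul, zero_mul]
  rw [Finset.sum_congr rfl fun s _ => hterm s, ← Fintype.prod_sum u,
    ← Finset.mul_prod_erase Finset.univ (fun j => ∑ δ, u j δ) (Finset.mem_univ i)]
  have h1 : (∑ δ, u i δ) = 1 := by simp [hu]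
  have h2 : ∏ j ∈ Finset.univ.erase i, (∑ δ, u j δ) = ∏ j ∈ Finset.univ.erase i, ∑ δ, h j δ :=
    Finset.prod_congr rfl fun j hj => by rw [hu, Function.update_of_ne (Finset.mem_erase.1 hj).1]
  rw [h1, h2, one_mul]

lemma expCost_eq_marg (strat : ∀ i, S i → Finset E) (a b : E → ℝ) (p : ∀ i, S i → ℝ)
    (hp : ∀ j, ∑ δ, p j δ = 1) (i : N) (γ : S i) :
    expCost strat a b p i γ =
      ∑ e ∈ strat i γ, (a e + b e + a e * ∑ j ∈ Finset.univ.erase i, marg strat p j e) := by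
  classical
  have step1 : expCost strat a b p i γ =
      ∑ e ∈ strat i γ, ∑ s : ∀ j, S j,
        (if s i = γ then (∏ j ∈ Finset.univ.erase i, p j (s j)) *
          (a e * (resLoad strat s e : ℝ) + b e) else 0) := by
    rw [expCost, Finset.sum_comm]
    refine Finset.sum_congr rfl fun s _ => ?_
    by_cases hs : s i = γ
    · simp only [if_pos hs, pureCost, hs, Finset.mul_sum, if_true]
    · simp [if_neg hs]
  rw [step1]
  refine Finset.sum_congr rfl fun e he => ?_
  -- resLoad decomposition for s with s i = γ
  have hload : ∀ s : ∀ j, S j, s i = γ → (resLoad strat s e : ℝ) =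
      1 + ∑ j ∈ Finset.univ.erase i, (if e ∈ strat j (s j) then (1:ℝ) else 0) := by
    intro s hs
    rw [resLoad, Finset.card_filter]
    push_cast
    rw [← Finset.add_sum_erase Finset.univ _ (Finset.mem_univ i)]
    congr 1
    simp [hs, he]
  have step2 : ∀ s : ∀ j, S j,
      (if s i = γ then (∏ j ∈ Finset.univ.erase i, p j (s j)) *
        (a e * (resLoad strat s e : ℝ) + b e) else 0)
      = (a e + b e) * (if s i = γ then ∏ j ∈ Finset.univ.erase i, p j (s j) else 0)
        + a e * ∑ j ∈ Finset.univ.erase i,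
            (if s i = γ then (∏ k ∈ Finset.univ.erase i, p k (s k)) *
              (if e ∈ strat j (s j) then (1:ℝ) else 0) else 0) := by
    intro s
    by_cases hs : s i = γ
    · simp only [if_pos hs, hload s hs, ← Finset.mul_sum]
      ring
    · simp [if_neg hs]
  rw [Finset.sum_congr rfl fun s _ => step2 s, Finset.sum_add_distrib, ← Finset.mul_sum,
    ← Finset.mul_sum, Finset.sum_comm]
  have hA : (∑ s : ∀ j, S j, if s i = γ then ∏ j ∈ Finset.univ.erase i, p j (s j) else 0) = 1 := by
    rw [sum_ite_pi]
    exact Finset.prod_eq_one fun j _ => hp j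
  have hB : ∀ k ∈ Finset.univ.erase i,
      (∑ s : ∀ j, S j, if s i = γ then (∏ j ∈ Finset.univ.erase i, p j (s j)) *
        (if e ∈ strat k (s k) then (1:ℝ) else 0) else 0) = marg strat p k e := by
    intro k hk
    have hki : k ≠ i := (Finset.mem_erase.1 hk).1
    set u : ∀ j, S j → ℝ :=
      Function.update p k (fun δ => if e ∈ strat k δ then p k δ else 0) with hu
    have hterm : ∀ s : ∀ j, S j,
        (∏ j ∈ Finset.univ.erase i, p j (s j)) * (if e ∈ strat k (s k) then (1:ℝ) else 0)
          = ∏ j ∈ Finset.univ.erase i, u j (s j) := by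
      intro s
      rw [← Finset.mul_prod_erase _ (fun j => u j (s j)) hk,
        ← Finset.mul_prod_erase _ (fun j => p j (s j)) hk]
      have h2 : ∏ j ∈ (Finset.univ.erase i).erase k, u j (s j)
          = ∏ j ∈ (Finset.univ.erase i).erase k, p j (s j) :=
        Finset.prod_congr rfl fun j hj => by
          rw [hu, Function.update_of_ne (Finset.mem_erase.1 hj).1]
      have h1 : u k (s k) = p k (s k) * (if e ∈ strat k (s k) then (1:ℝ) else 0) := by
        simp only [hu, Function.update_self]
        split_ifs <;> simp
      rw [h1, h2]; ring
    calc (∑ s : ∀ j, S j, if s i = γ then (∏ j ∈ Finset.univ.erase i, p j (s j)) *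
            (if e ∈ strat k (s k) then (1:ℝ) else 0) else 0)
        = ∑ s : ∀ j, S j, if s i = γ then ∏ j ∈ Finset.univ.erase i, u j (s j) else 0 :=
          Finset.sum_congr rfl fun s _ => by rw [hterm s]
      _ = ∏ j ∈ Finset.univ.erase i, ∑ δ, u j δ := sum_ite_pi i γ u
      _ = marg strat p k e := ?_
    rw [← Finset.mul_prod_erase _ (fun j => ∑ δ, u j δ) hk]
    have h1 : (∑ δ, u k δ) = marg strat p k e := by
      rw [marg]; exact Finset.sum_congr rfl fun δ _ => by simp [hu]
    have h2 : ∏ j ∈ (Finset.univ.erase i).erase k, (∑ δ, u j δ) = 1 :=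
      Finset.prod_eq_one fun j hj => by
        rw [hu, Function.update_of_ne (Finset.mem_erase.1 hj).1]; exact hp j
    rw [h1, h2, mul_one]
  have hBsum := Finset.sum_congr rfl hB
  rw [hA, mul_one, hBsum]

lemma erase_mul_sum (f g : N → ℝ) :
    ∑ i, f i * ∑ j ∈ Finset.univ.erase i, g j
      = (∑ i, f i) * (∑ j, g j) - ∑ i, f i * g i := by
  have h : ∀ i : N, ∑ j ∈ Finset.univ.erase i, g j = (∑ j, g j) - g i := fun i => by
    rw [eq_sub_iff_add_eq, Finset.sum_erase_add _ _ (Finset.mem_univ i)]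
  simp only [h, mul_sub, Finset.sum_sub_distrib, ← Finset.sum_mul]

lemma crossSum_eval (strat : ∀ i, S i → Finset E) (a b : E → ℝ) (r p : ∀ i, S i → ℝ)
    (hp : ∀ j, ∑ δ, p j δ = 1) :
    ∑ i, ∑ γ, r i γ * expCost strat a b p i γ
      = (∑ i, ∑ γ, (∑ e ∈ strat i γ, (a e + b e)) * r i γ)
        + ∑ e, a e * ((∑ i, marg strat r i e) * (∑ i, marg strat p i e)
            - ∑ i, marg strat r i e * marg strat p i e) := by
  classical
  have key : ∀ i : N, ∀ γ : S i, r i γ * expCost strat a b p i γ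
      = (∑ e ∈ strat i γ, (a e + b e)) * r i γ
        + ∑ e, (if e ∈ strat i γ then
            (a e * ∑ j ∈ Finset.univ.erase i, marg strat p j e) * r i γ else 0) := by
    intro i γ
    rw [expCost_eq_marg strat a b p hp i γ, Finset.mul_sum]
    have h1 : ∀ e ∈ strat i γ,
        r i γ * (a e + b e + a e * ∑ j ∈ Finset.univ.erase i, marg strat p j e)
          = (a e + b e) * r i γ
            + (a e * ∑ j ∈ Finset.univ.erase i, marg strat p j e) * r i γ := fun e _ => by ring
    rw [Finset.sum_congr rfl h1, Finset.sum_add_distrib, ← Finset.sum_mul]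
    congr 1
    rw [← Finset.sum_filter]
    congr 1
    ext e
    simp [Finset.mem_filter]
  have step : ∑ i, ∑ γ, r i γ * expCost strat a b p i γ
      = (∑ i, ∑ γ, (∑ e ∈ strat i γ, (a e + b e)) * r i γ)
        + ∑ i, ∑ γ, ∑ e, (if e ∈ strat i γ then
            (a e * ∑ j ∈ Finset.univ.erase i, marg strat p j e) * r i γ else 0) := by
    rw [← Finset.sum_add_distrib]
    refine Finset.sum_congr rfl fun i _ => ?_
    rw [← Finset.sum_add_distrib]
    exact Finset.sum_congr rfl fun γ _ => key i γ
  rw [step]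
  congr 1
  have h2 : ∀ i : N, ∑ γ, ∑ e, (if e ∈ strat i γ then
      (a e * ∑ j ∈ Finset.univ.erase i, marg strat p j e) * r i γ else 0)
      = ∑ e, (a e * ∑ j ∈ Finset.univ.erase i, marg strat p j e) * marg strat r i e := by
    intro i
    rw [Finset.sum_comm]
    refine Finset.sum_congr rfl fun e _ => ?_
    simp only [marg, Finset.mul_sum]
    refine Finset.sum_congr rfl fun γ _ => ?_
    split_ifs <;> ring
  rw [Finset.sum_congr rfl fun i _ => h2 i, Finset.sum_comm]
  refine Finset.sum_congr rfl fun e _ => ?_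
  rw [← erase_mul_sum (fun i => marg strat r i e) (fun j => marg strat p j e)]
  rw [Finset.mul_sum]
  exact Finset.sum_congr rfl fun i _ => by ring

lemma cross_id (strat : ∀ i, S i → Finset E) (a b : E → ℝ) (p q : ∀ i, S i → ℝ)
    (hp : ∀ j, ∑ δ, p j δ = 1) (hq : ∀ j, ∑ δ, q j δ = 1) :
    (∑ i, ∑ γ, q i γ * expCost strat a b p i γ)
        + (∑ i, ∑ γ, (∑ e ∈ strat i γ, (a e + b e)) * p i γ)
      = (∑ i, ∑ γ, p i γ * expCost strat a b q i γ)
        + (∑ i, ∑ γ, (∑ e ∈ strat i γ, (a e + b e)) * q i γ) := by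
  rw [crossSum_eval strat a b q p hp, crossSum_eval strat a b p q hq]
  have h : ∀ e : E, a e * ((∑ i, marg strat q i e) * (∑ i, marg strat p i e)
        - ∑ i, marg strat q i e * marg strat p i e)
      = a e * ((∑ i, marg strat p i e) * (∑ i, marg strat q i e)
        - ∑ i, marg strat p i e * marg strat q i e) := by
    intro e
    have : (∑ i, marg strat q i e * marg strat p i e)
        = ∑ i, marg strat p i e * marg strat q i e :=
      Finset.sum_congr rfl fun i _ => mul_comm _ _
    rw [this, mul_comm (∑ i, marg strat q i e)]
  rw [Finset.sum_congr rfl fun e _ => h e]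
  ring


/-- **Derivative of the relative entropy along replicator trajectories.**
For a fixed point `q` of the replicator dynamics of a linear congestion game and
a solution `p(t)` remaining in the interior of `Δ` for all `t`, the relative
entropy satisfies `I ≥ 0` with equality exactly at `q`, and
`dI(p(t))/dt = Ψ(q) - Ψ(p(t)) - Σ_{i,γ} p_{iγ}(t)(d̂_i - d_{iγ})`
with `d_{iγ} = c_{iγ}(q)` and `d̂_i = ĉ_i(q)`. -/
theorem relEnt_deriv_along_replicator
    (strat : ∀ i, S i → Finset E) (a b : E → ℝ)
    (ha : ∀ e, 0 ≤ a e) (hb : ∀ e, 0 ≤ b e)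
    (hcard : ∀ i, 2 ≤ Fintype.card (S i))
    (q : ∀ i, S i → ℝ) (hq : inSimplex q) (hqfix : isFixedPt strat a b q)
    (p : ℝ → ∀ i, S i → ℝ)
    (hpΔ : ∀ t, inSimplex (p t)) (hppos : ∀ t i (γ : S i), 0 < p t i γ)
    (hode : ∀ t, ∀ i (γ : S i),
      HasDerivAt (fun τ => p τ i γ)
        (p t i γ * (avgCost strat a b (p t) i - expCost strat a b (p t) i γ)) t) :
    (∀ p' : ∀ i, S i → ℝ, inSimplex p' → (∀ i γ, 0 < p' i γ) →
      0 ≤ relEnt q p' ∧ (relEnt q p' = 0 ↔ p' = q)) ∧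
    ∀ t : ℝ, HasDerivAt (fun τ => relEnt q (p τ))
      (potFn strat a b q - potFn strat a b (p t)
        - ∑ i, ∑ γ, p t i γ * (avgCost strat a b q i - expCost strat a b q i γ)) t := by
  classical
  constructor
  · -- Gibbs inequality
    intro p' hp' hpos'
    have hle : ∀ i : N, ∀ γ : S i,
        (if 0 < q i γ then q i γ * Real.log (p' i γ / q i γ) else 0) ≤ p' i γ - q i γ := by
      intro i γ
      by_cases h : 0 < q i γ
      · rw [if_pos h]
        have hlog := Real.log_le_sub_one_of_pos (div_pos (hpos' i γ) h)
        have h1 := mul_le_mul_of_nonneg_left hlog h.le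
        have h2 : q i γ * (p' i γ / q i γ - 1) = p' i γ - q i γ := by field_simp
        linarith
      · rw [if_neg h]
        have hq0 : q i γ = 0 := le_antisymm (not_lt.1 h) ((hq i).1 γ)
        rw [hq0, sub_zero]
        exact (hpos' i γ).le
    have hinle : ∀ i : N, (∑ γ, if 0 < q i γ then q i γ * Real.log (p' i γ / q i γ) else 0)
        ≤ ∑ γ, (p' i γ - q i γ) := fun i => Finset.sum_le_sum fun γ _ => hle i γ
    have hsumz : ∀ i : N, ∑ γ : S i, (p' i γ - q i γ) = 0 := fun i => by
      rw [Finset.sum_sub_distrib, (hp' i).2, (hq i).2, sub_self]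
    have htotle : (∑ i, ∑ γ, if 0 < q i γ then q i γ * Real.log (p' i γ / q i γ) else 0) ≤ 0 := by
      calc (∑ i, ∑ γ, if 0 < q i γ then q i γ * Real.log (p' i γ / q i γ) else 0)
          ≤ ∑ i, ∑ γ, (p' i γ - q i γ) := Finset.sum_le_sum fun i _ => hinle i
        _ = 0 := by simp [hsumz]
    refine ⟨by rw [relEnt]; linarith, fun h0 => ?_, fun hpq => ?_⟩
    · have htot : (∑ i, ∑ γ, if 0 < q i γ then q i γ * Real.log (p' i γ / q i γ) else 0) = 0 := by
        rw [relEnt] at h0; linarith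
      have heq : ∀ i ∈ (Finset.univ : Finset N),
          (∑ γ, if 0 < q i γ then q i γ * Real.log (p' i γ / q i γ) else 0)
            = ∑ γ, (p' i γ - q i γ) := by
        apply (Finset.sum_eq_sum_iff_of_le fun i _ => hinle i).1
        rw [htot]
        simp [hsumz]
      have heq2 : ∀ i : N, ∀ γ : S i,
          (if 0 < q i γ then q i γ * Real.log (p' i γ / q i γ) else 0) = p' i γ - q i γ :=
        fun i γ => (Finset.sum_eq_sum_iff_of_le fun γ _ => hle i γ).1
          (heq i (Finset.mem_univ i)) γ (Finset.mem_univ γ)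
      funext i γ
      by_cases h : 0 < q i γ
      · by_contra hne
        have hd : p' i γ / q i γ ≠ 1 := fun h1 => hne ((div_eq_one_iff_eq h.ne').1 h1)
        have hstrict := Real.log_lt_sub_one_of_pos (div_pos (hpos' i γ) h) hd
        have h1 := mul_lt_mul_of_pos_left hstrict h
        have h2 : q i γ * (p' i γ / q i γ - 1) = p' i γ - q i γ := by field_simp
        have h3 := heq2 i γ
        rw [if_pos h] at h3
        linarith
      · have hq0 : q i γ = 0 := le_antisymm (not_lt.1 h) ((hq i).1 γ)
        have h3 := heq2 i γ
        rw [if_neg h, hq0, sub_zero] at h3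
        exact absurd h3.symm (hpos' i γ).ne'
    · rw [hpq, relEnt]
      have h4 : ∀ i : N, ∀ γ : S i,
          (if 0 < q i γ then q i γ * Real.log (q i γ / q i γ) else 0) = 0 := by
        intro i γ
        split_ifs with h
        · rw [div_self h.ne', Real.log_one, mul_zero]
        · rfl
      simp [h4]
  · -- derivative
    intro t
    have hp1 : ∀ j, ∑ δ, p t j δ = 1 := fun j => (hpΔ t j).2
    have hq1 : ∀ j, ∑ δ, q j δ = 1 := fun j => (hq j).2
    have hterm : ∀ i : N, ∀ γ : S i,
        HasDerivAt (fun τ => if 0 < q i γ then q i γ * Real.log (p τ i γ / q i γ) else 0)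
          (q i γ * (avgCost strat a b (p t) i - expCost strat a b (p t) i γ)) t := by
      intro i γ
      by_cases h : 0 < q i γ
      · simp only [if_pos h]
        have h1 := hode t i γ
        have h2 := (h1.div_const (q i γ)).log
          (div_pos (hppos t i γ) h).ne'
        have h3 := h2.const_mul (q i γ)
        convert h3 using 1
        have hqne : q i γ ≠ 0 := h.ne'
        have hpne : p t i γ ≠ 0 := (hppos t i γ).ne'
        case e'_4 => rfl
        case e'_5 => rfl
        rw [div_div_div_cancel_right₀ h.ne', mul_div_cancel_left₀ _ (hppos t i γ).ne']
      · have hq0 : q i γ = 0 := le_antisymm (not_lt.1 h) ((hq i).1 γ)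
        have h0 : q i γ * (avgCost strat a b (p t) i - expCost strat a b (p t) i γ) = 0 := by
          rw [hq0, zero_mul]
        simp only [if_neg h]
        rw [h0]
        exact hasDerivAt_const t 0
    have Hs : HasDerivAt
        (fun τ => ∑ i, ∑ γ, if 0 < q i γ then q i γ * Real.log (p τ i γ / q i γ) else 0)
        (∑ i, ∑ γ, q i γ * (avgCost strat a b (p t) i - expCost strat a b (p t) i γ)) t :=
      HasDerivAt.fun_sum fun i _ => HasDerivAt.fun_sum fun γ _ => hterm i γ
    have Hneg := Hs.neg
    have e1 : ∀ i : N, ∑ γ, p t i γ * (avgCost strat a b q i - expCost strat a b q i γ)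
        = avgCost strat a b q i - ∑ γ, p t i γ * expCost strat a b q i γ := by
      intro i
      simp only [mul_sub]
      rw [Finset.sum_sub_distrib, ← Finset.sum_mul, hp1 i, one_mul]
    have e2 : ∀ i : N, ∑ γ, q i γ * (avgCost strat a b (p t) i - expCost strat a b (p t) i γ)
        = avgCost strat a b (p t) i - ∑ γ, q i γ * expCost strat a b (p t) i γ := by
      intro i
      simp only [mul_sub]
      rw [Finset.sum_sub_distrib, ← Finset.sum_mul, hq1 i, one_mul]
    have hc := cross_id strat a b (p t) q hp1 hq1
    have hval : potFn strat a b q - potFn strat a b (p t)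
        - ∑ i, ∑ γ, p t i γ * (avgCost strat a b q i - expCost strat a b q i γ)
        = -∑ i, ∑ γ, q i γ * (avgCost strat a b (p t) i - expCost strat a b (p t) i γ) := by
      rw [Finset.sum_congr rfl fun i _ => e1 i, Finset.sum_congr rfl fun i _ => e2 i,
        Finset.sum_sub_distrib, Finset.sum_sub_distrib]
      simp only [potFn]
      linarith
    rw [hval]
    exact Hneg
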